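/- In the single-score MNL equilibrium p̂ = [A^{−1}(q − γ/Γ)]^+, any school c with p̂_c > 0 has demand exactly q_c, and any school c with p̂_c = 0 (letting b be the smallest index with p̂_b > 0) has demand D_c = (γ_c/Σ_{i=1}^{b−1} γ_i)(Σ_{i=1}^{b−1} γ_i/Γ − Σ_{j=b}^{n}(q_j − γ_j/Γ)) which equals −(γ_c/Σ_{i=1}^{b−1}γ_i) Σ_{j=b}^{n}(q_j − γ_j/Γ) + γ_c/Γ ≤ q_c. -/
import Mathlib


open Finset

/-- The upper triangular demand matrix `A`. -/
noncomputable def Amat {n : ℕ} (γ : Fin n → ℝ) : Matrix (Fin n) (Fin n) ℝ :=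
  Matrix.of fun i j =>
    if i = j then -γ i / ∑ k ∈ Iic i, γ k
    else if i < j then γ i * (1 / ∑ k ∈ Iio j, γ k - 1 / ∑ k ∈ Iic j, γ k)
    else 0

/-- The explicit inverse `A⁻¹`. -/
noncomputable def Bmat {n : ℕ} (γ : Fin n → ℝ) : Matrix (Fin n) (Fin n) ℝ :=
  Matrix.of fun i j =>
    if i = j then -(∑ k ∈ Iic i, γ k) / γ i
    else if i < j then -1
    else 0

namespace MNLaux
variable {n : ℕ}

noncomputable def Sp (γ : Fin n → ℝ) (m : Fin n) : ℝ := ∑ k ∈ Iio m, γ k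
noncomputable def Sc (γ : Fin n → ℝ) (m : Fin n) : ℝ := ∑ k ∈ Iic m, γ k

lemma fin_Ici_insert (m m' : Fin n) (h : (m' : ℕ) = (m : ℕ) + 1) :
    Ici m = insert m (Ici m') := by
  ext j
  simp only [Finset.mem_Ici, Finset.mem_insert, Fin.le_def, Fin.ext_iff]
  omega

lemma fin_Ioi_eq (m m' : Fin n) (h : (m' : ℕ) = (m : ℕ) + 1) :
    Ioi m = Ici m' := by
  ext j
  simp only [Finset.mem_Ici, Finset.mem_Ioi, Fin.le_def, Fin.lt_def]
  omega

lemma fin_Iio_eq (m m' : Fin n) (h : (m' : ℕ) = (m : ℕ) + 1) :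
    Iio m' = Iic m := by
  ext j
  simp only [Finset.mem_Iic, Finset.mem_Iio, Fin.le_def, Fin.lt_def]
  omega

lemma fin_Ici_last (m : Fin n) (h : (m : ℕ) + 1 = n) : Ici m = {m} := by
  ext j
  simp only [Finset.mem_Ici, Finset.mem_singleton, Fin.le_def, Fin.ext_iff]
  omega

lemma fin_Ioi_last (m : Fin n) (h : (m : ℕ) + 1 = n) : Ioi m = ∅ := by
  ext j
  simp only [Finset.mem_Ioi, Finset.notMem_empty, Fin.lt_def, iff_false, not_lt]
  omega

lemma m_notmem_Ici (m m' : Fin n) (h : (m' : ℕ) = (m : ℕ) + 1) : m ∉ Ici m' := by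
  simp only [Finset.mem_Ici, Fin.le_def]; omega

variable {γ : Fin n → ℝ} (hγ : ∀ i, 0 < γ i)
set_option linter.unusedSectionVars false

include hγ

lemma Sp_nonneg (m : Fin n) : 0 ≤ Sp γ m :=
  Finset.sum_nonneg fun i _ => (hγ i).le

lemma Sc_eq (m : Fin n) : Sc γ m = γ m + Sp γ m := by
  rw [Sc, Sp, ← Finset.Iio_insert, Finset.sum_insert (by simp)]

lemma Sc_pos (m : Fin n) : 0 < Sc γ m := by
  rw [Sc_eq hγ]; have := Sp_nonneg hγ m; have := hγ m; linarith

lemma Sp_pos (m : Fin n) (h : 0 < (m : ℕ)) : 0 < Sp γ m := by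
  have h0 : (0 : ℕ) < n := lt_of_le_of_lt (Nat.zero_le _) m.isLt
  apply Finset.sum_pos (fun i _ => hγ i)
  exact ⟨⟨0, h0⟩, by simpa [Finset.mem_Iio, Fin.lt_def] using h⟩

lemma Sp_succ (m m' : Fin n) (h : (m' : ℕ) = (m : ℕ) + 1) :
    Sp γ m' = Sc γ m := by rw [Sp, Sc, fin_Iio_eq m m' h]

/-- Expansion of `A.mulVec`. -/
lemma mulVecA (x : Fin n → ℝ) (c : Fin n) :
    (Amat γ).mulVec x c
      = -γ c / Sc γ c * x c + ∑ j ∈ Ioi c, γ c * (1 / Sp γ j - 1 / Sc γ j) * x j := by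
  rw [Matrix.mulVec, dotProduct]
  rw [← Finset.sum_subset (Finset.subset_univ (Ici c))
    (f := fun j => Amat γ c j * x j) ?_]
  · rw [← Finset.Ioi_insert, Finset.sum_insert (by simp)]
    congr 1
    · simp [Amat, Sc]
    · apply Finset.sum_congr rfl
      intro j hj
      have hj' : c < j := by simpa using hj
      simp [Amat, hj'.ne, hj', Sp, Sc]
  · intro j _ hj
    have hj' : j < c := by simpa using hj
    simp [Amat, (hj'.ne' : ¬ c = j), (by exact not_lt_of_gt hj' : ¬ c < j)]

/-- Expansion of `B.mulVec`. -/
lemma mulVecB (x : Fin n → ℝ) (c : Fin n) :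
    (Bmat γ).mulVec x c
      = -(Sc γ c) / γ c * x c - ∑ j ∈ Ioi c, x j := by
  rw [Matrix.mulVec, dotProduct]
  rw [← Finset.sum_subset (Finset.subset_univ (Ici c))
    (f := fun j => Bmat γ c j * x j) ?_]
  · rw [← Finset.Ioi_insert, Finset.sum_insert (by simp)]
    rw [sub_eq_add_neg, ← Finset.sum_neg_distrib]
    congr 1
    · simp [Bmat, Sc]
    · apply Finset.sum_congr rfl
      intro j hj
      have hj' : c < j := by simpa using hj
      simp [Bmat, hj'.ne, hj']
  · intro j _ hj
    have hj' : j < c := by simpa using hj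
    simp [Bmat, (hj'.ne' : ¬ c = j), (by exact not_lt_of_gt hj' : ¬ c < j)]

/-- The key telescoping identity. -/
lemma telescope (v : Fin n → ℝ) :
    ∀ (d : ℕ) (m : Fin n), n - (m : ℕ) ≤ d → 0 < (m : ℕ) →
      ∑ j ∈ Ici m, (1 / Sp γ j - 1 / Sc γ j) * (-(Sc γ j) / γ j * v j - ∑ k ∈ Ioi j, v k)
        = -(∑ j ∈ Ici m, v j) / Sp γ m := by
  intro d
  induction d with
  | zero => intro m hm _; exact absurd hm (by omega)
  | succ d ih =>
    intro m hm hmpos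
    have hγm := hγ m
    have hSp := Sp_pos hγ m hmpos
    have hSc := Sc_pos hγ m
    rcases eq_or_lt_of_le (Nat.succ_le_of_lt m.isLt) with hlast | hlt
    · -- m is the last index
      rw [fin_Ici_last m hlast, Finset.sum_singleton, Finset.sum_singleton,
        fin_Ioi_last m hlast, Finset.sum_empty]
      have hScm : Sc γ m = γ m + Sp γ m := Sc_eq hγ m
      field_simp
      rw [hScm]; ring
    · set m' : Fin n := ⟨(m : ℕ) + 1, hlt⟩ with hm'
      have hmm' : (m' : ℕ) = (m : ℕ) + 1 := rfl
      have hrec := ih m' (by omega) (by omega)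
      have hIci := fin_Ici_insert m m' hmm'
      have hIoi := fin_Ioi_eq m m' hmm'
      have hnot := m_notmem_Ici m m' hmm'
      rw [hIci, Finset.sum_insert hnot, Finset.sum_insert hnot, hIoi, hrec]
      have hSps : Sp γ m' = Sc γ m := Sp_succ hγ m m' hmm'
      rw [hSps]
      have hScm : Sc γ m = γ m + Sp γ m := Sc_eq hγ m
      field_simp
      rw [hScm]; ring

end MNLaux

namespace MNLaux
variable {n : ℕ} {γ : Fin n → ℝ} (hγ : ∀ i, 0 < γ i)
set_option linter.unusedSectionVars false

/-- The explicit formula for `(B v) i`. -/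
noncomputable def Bvf (γ v : Fin n → ℝ) (i : Fin n) : ℝ :=
  -(Sc γ i) / γ i * v i - ∑ k ∈ Ioi i, v k

include hγ

lemma pos_step (v : Fin n → ℝ) (i i' : Fin n) (h : (i' : ℕ) = (i : ℕ) + 1)
    (hvm : v i' / γ i' ≤ v i / γ i) (hpos : 0 < Bvf γ v i) : 0 < Bvf γ v i' := by
  have hγi := hγ i; have hγi' := hγ i'
  have e1 : ∑ j ∈ Ioi i, v j = v i' + ∑ j ∈ Ioi i', v j := by
    rw [fin_Ioi_eq i i' h, ← Finset.Ioi_insert, Finset.sum_insert (by simp)]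
  have e2 : Sc γ i' = γ i' + Sc γ i := by rw [Sc_eq hγ i', Sp_succ hγ i i' h]
  have e3 : -(Sc γ i') / γ i' * v i' = -v i' - Sc γ i * (v i' / γ i') := by
    rw [e2]; field_simp; ring
  have e4 : Sc γ i * (v i' / γ i') ≤ Sc γ i * (v i / γ i) :=
    mul_le_mul_of_nonneg_left hvm (Sc_pos hγ i).le
  have e5 : Sc γ i * (v i / γ i) = Sc γ i / γ i * v i := by ring
  rw [Bvf, e1] at hpos
  rw [Bvf, e3]
  have e6 : -Sc γ i / γ i * v i = -(Sc γ i * (v i / γ i)) := by ring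
  rw [e6] at hpos
  linarith

lemma pos_propagate (v : Fin n → ℝ)
    (hvmono : ∀ i j : Fin n, i ≤ j → v j / γ j ≤ v i / γ i)
    (b : Fin n) (hb : 0 < Bvf γ v b) : ∀ j : Fin n, b ≤ j → 0 < Bvf γ v j := by
  suffices H : ∀ k, (b : ℕ) ≤ k → ∀ hkn : k < n, 0 < Bvf γ v ⟨k, hkn⟩ by
    intro j hj
    have := H (j : ℕ) hj j.isLt
    simpa using this
  intro k hk
  induction k, hk using Nat.le_induction with
  | base => intro hkn; simpa using hb
  | succ k hk IH =>
    intro hkn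
    have hkn' : k < n := by omega
    exact pos_step hγ v ⟨k, hkn'⟩ ⟨k + 1, hkn⟩ rfl
      (hvmono ⟨k, hkn'⟩ ⟨k + 1, hkn⟩ (by simp [Fin.le_def])) (IH hkn')

/-- Sum over the tail `Ici m`. -/
noncomputable def Tt (v : Fin n → ℝ) (m : Fin n) : ℝ := ∑ j ∈ Ici m, v j

lemma Bvf_Tt (v : Fin n → ℝ) (i : Fin n) :
    Bvf γ v i = -(Sp γ i) / γ i * v i - Tt v i := by
  have hγi := hγ i
  have e1 : Tt v i = v i + ∑ j ∈ Ioi i, v j := by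
    rw [Tt, ← Finset.Ioi_insert, Finset.sum_insert (by simp)]
  rw [Bvf, e1, Sc_eq hγ i]
  field_simp
  ring

lemma neg_propagate (v : Fin n → ℝ)
    (hvmono : ∀ i j : Fin n, i ≤ j → v j / γ j ≤ v i / γ i)
    (c : Fin n) (hc : Bvf γ v c ≤ 0) :
    ∀ j : Fin n, c ≤ j → -Tt v j ≤ Sp γ j * (v c / γ c) := by
  suffices H : ∀ k, (c : ℕ) ≤ k → ∀ hkn : k < n,
      -Tt v ⟨k, hkn⟩ ≤ Sp γ ⟨k, hkn⟩ * (v c / γ c) by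
    intro j hj
    have := H (j : ℕ) hj j.isLt
    simpa using this
  intro k hk
  induction k, hk using Nat.le_induction with
  | base =>
    intro hkn
    have hc' : -(Sp γ c) / γ c * v c - Tt v c ≤ 0 := by rw [← Bvf_Tt hγ]; exact hc
    have hγc := hγ c
    have : -(Sp γ c) / γ c * v c = -(Sp γ c * (v c / γ c)) := by ring
    rw [this] at hc'
    simp only [Fin.eta]
    linarith
  | succ k hk IH =>
    intro hkn
    have hkn' : k < n := by omega
    set i : Fin n := ⟨k, hkn'⟩
    set i' : Fin n := ⟨k + 1, hkn⟩
    have hii' : (i' : ℕ) = (i : ℕ) + 1 := rfl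
    have hγi := hγ i; have hγc := hγ c
    have e1 : Tt v i = v i + Tt v i' := by
      rw [Tt, Tt, fin_Ici_insert i i' hii', Finset.sum_insert (m_notmem_Ici i i' hii')]
    have e2 : Sp γ i' = γ i + Sp γ i := by rw [Sp_succ hγ i i' hii', Sc_eq hγ i]
    have e3 : v i / γ i ≤ v c / γ c := hvmono c i (by simp [Fin.le_def, i]; omega)
    have e4 : γ i * (v i / γ i) ≤ γ i * (v c / γ c) :=
      mul_le_mul_of_nonneg_left e3 hγi.le
    have e5 : γ i * (v i / γ i) = v i := by field_simp
    have := IH hkn'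
    rw [e2]
    nlinarith

end MNLaux


open MNLaux

/-- At the MNL equilibrium `p̂ = [A⁻¹(q - γ/Γ)]⁺`, every school with a positive
cutoff fills its capacity exactly, and every school with a zero cutoff (below
the first positive-cutoff index `b`) has demand
`D_c = -(γ_c/Σ_{i<b} γ_i) Σ_{j≥b} (q_j - γ_j/Γ) + γ_c/Γ
    = (γ_c/Σ_{i<b} γ_i)(Σ_{i<b} γ_i/Γ - Σ_{j≥b}(q_j - γ_j/Γ)) ≤ q_c`. -/
theorem mnl_equilibrium_demand {n : ℕ} (γ q : Fin n → ℝ)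
    (hγ : ∀ i, 0 < γ i) (hq : ∀ i, 0 < q i)
    (hratio : ∀ i j : Fin n, i ≤ j → γ i / q i ≤ γ j / q j)
    (Γ : ℝ) (hΓ : Γ = ∑ i, γ i)
    (phat : Fin n → ℝ)
    (hphat : phat = fun c => max 0 (((Bmat γ).mulVec fun c => q c - γ c / Γ) c))
    (D : Fin n → ℝ) (hD : D = fun c => (Amat γ).mulVec phat c + γ c / Γ)
    (b : Fin n) (hb : 0 < phat b) (hbfirst : ∀ j, j < b → phat j = 0)
    (hbpos : 0 < (b : ℕ)) :
    (∀ c, 0 < phat c → D c = q c) ∧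
    (∀ c, c < b →
      D c = -(γ c / ∑ i ∈ Iio b, γ i) * (∑ j ∈ Ici b, (q j - γ j / Γ)) + γ c / Γ ∧
      D c = (γ c / ∑ i ∈ Iio b, γ i) *
        ((∑ i ∈ Iio b, γ i) / Γ - ∑ j ∈ Ici b, (q j - γ j / Γ)) ∧
      D c ≤ q c) := by
  have hΓpos : 0 < Γ := by
    rw [hΓ]; exact Finset.sum_pos (fun i _ => hγ i) ⟨b, Finset.mem_univ b⟩
  set v : Fin n → ℝ := fun c => q c - γ c / Γ with hv
  have hvc : ∀ c, v c = q c - γ c / Γ := fun c => rfl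
  have hphat' : ∀ i, phat i = max 0 (Bvf γ v i) := by
    intro i; rw [hphat]
    show max 0 ((Bmat γ).mulVec v i) = _
    rw [mulVecB hγ v i]; rfl
  have hvmono : ∀ i j : Fin n, i ≤ j → v j / γ j ≤ v i / γ i := by
    intro i j hij
    have h1 : γ i / q i ≤ γ j / q j := hratio i j hij
    rw [div_le_div_iff₀ (hq i) (hq j)] at h1
    have e : ∀ k, v k / γ k = q k / γ k - 1 / Γ := by
      intro k
      have h := (hγ k).ne'
      rw [hvc, sub_div]
      congr 1
      rw [div_right_comm, div_self h]
    rw [e i, e j]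
    have h2 : q j / γ j ≤ q i / γ i := by
      rw [div_le_div_iff₀ (hγ j) (hγ i)]
      nlinarith
    linarith
  have hbB : 0 < Bvf γ v b := by
    have := hb
    rw [hphat' b] at this
    by_contra h
    push_neg at h
    rw [max_eq_left h] at this
    exact lt_irrefl 0 this
  have hBvpos : ∀ j, b ≤ j → 0 < Bvf γ v j := pos_propagate hγ v hvmono b hbB
  have hppos : ∀ j, b ≤ j → phat j = Bvf γ v j := by
    intro j hj; rw [hphat' j]; exact max_eq_right (hBvpos j hj).le
  have hTel : ∀ m : Fin n, 0 < (m : ℕ) →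
      ∑ j ∈ Ici m, (1 / Sp γ j - 1 / Sc γ j) * Bvf γ v j = -(Tt v m) / Sp γ m := by
    intro m hm
    have := telescope hγ v n m (by omega) hm
    simpa [Bvf, Tt] using this
  constructor
  · -- part 1
    intro c hc
    have hbc : b ≤ c := by
      by_contra h
      push_neg at h
      rw [hbfirst c h] at hc
      exact lt_irrefl 0 hc
    have hγc := hγ c
    have hScc := Sc_pos hγ c
    rw [hD]
    simp only
    rw [mulVecA hγ phat c, hppos c hbc]
    rcases eq_or_lt_of_le (Nat.succ_le_of_lt c.isLt) with hlast | hlt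
    · rw [fin_Ioi_last c hlast, Finset.sum_empty]
      simp only [Bvf, fin_Ioi_last c hlast, Finset.sum_empty]
      rw [hvc]
      field_simp
      ring
    · set c' : Fin n := ⟨(c : ℕ) + 1, hlt⟩ with hc'
      have hcc' : (c' : ℕ) = (c : ℕ) + 1 := rfl
      have hsum : ∑ j ∈ Ioi c, γ c * (1 / Sp γ j - 1 / Sc γ j) * phat j
          = γ c * (-(Tt v c') / Sp γ c') := by
        rw [fin_Ioi_eq c c' hcc', ← hTel c' (by omega), Finset.mul_sum]
        apply Finset.sum_congr rfl
        intro j hj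
        have hj' : c' ≤ j := by simpa using hj
        have hbj : b ≤ j := le_trans hbc (le_trans (le_of_lt (by simp [Fin.lt_def, hcc'])) hj')
        rw [hppos j hbj]; ring
      rw [hsum]
      simp only [Bvf, fin_Ioi_eq c c' hcc']
      have hsp : Sp γ c' = Sc γ c := Sp_succ hγ c c' hcc'
      have hTT : ∑ j ∈ Ici c', v j = Tt v c' := rfl
      rw [hTT, hsp, hvc]
      field_simp
      ring
  · -- part 2
    intro c hcb
    have hγc := hγ c
    have hSpb := Sp_pos hγ b hbpos
    have hScc := Sc_pos hγ c
    have hD1 : D c = γ c * (-(Tt v b) / Sp γ b) + γ c / Γ := by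
      rw [hD]
      simp only
      rw [mulVecA hγ phat c, hbfirst c hcb]
      have hsub : ∑ j ∈ Ioi c, γ c * (1 / Sp γ j - 1 / Sc γ j) * phat j
          = ∑ j ∈ Ici b, γ c * (1 / Sp γ j - 1 / Sc γ j) * phat j := by
        symm
        apply Finset.sum_subset
        · intro j hj
          have : b ≤ j := by simpa using hj
          simpa using lt_of_lt_of_le hcb this
        · intro j _ hj
          have : j < b := by simpa using hj
          rw [hbfirst j this, mul_zero]
      have hsum : ∑ j ∈ Ici b, γ c * (1 / Sp γ j - 1 / Sc γ j) * phat j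
          = γ c * (-(Tt v b) / Sp γ b) := by
        rw [← hTel b hbpos, Finset.mul_sum]
        apply Finset.sum_congr rfl
        intro j hj
        have hbj : b ≤ j := by simpa using hj
        rw [hppos j hbj]; ring
      rw [hsub, hsum]
      ring
    have hSpb' : Sp γ b = ∑ i ∈ Iio b, γ i := rfl
    have hTb : Tt v b = ∑ j ∈ Ici b, (q j - γ j / Γ) := rfl
    refine ⟨?_, ?_, ?_⟩
    · rw [hD1, ← hSpb', ← hTb]; ring
    · rw [hD1, ← hSpb', ← hTb]
      field_simp
      ring
    · have hBvc : Bvf γ v c ≤ 0 := by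
        have h0 : phat c = 0 := hbfirst c hcb
        rw [hphat' c] at h0
        by_contra h
        push_neg at h
        rw [max_eq_right h.le] at h0
        exact absurd h0 h.ne'
      have key := neg_propagate hγ v hvmono c hBvc b (le_of_lt hcb)
      have key2 : γ c * (-(Tt v b)) ≤ Sp γ b * v c := by
        have := mul_le_mul_of_nonneg_left key hγc.le
        have e : γ c * (Sp γ b * (v c / γ c)) = Sp γ b * v c := by
          field_simp
        linarith [e ▸ this]
      have key3 : γ c * (-(Tt v b)) / Sp γ b ≤ Sp γ b * v c / Sp γ b := by
        gcongr
      have e2 : Sp γ b * v c / Sp γ b = v c := by field_simp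
      rw [hD1]
      have e3 : γ c * (-(Tt v b) / Sp γ b) = γ c * (-(Tt v b)) / Sp γ b := by ring
      rw [e3]
      have := hvc c
      linarith
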